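/- For every real μ ≥ 0 and every real x, |e_μ(−ix)| ≤ 1. Moreover, if μ > 0 and x ≠ 0 then |e_μ(−ix)| < 1. -/

import Mathlib

open MeasureTheory
open scoped BigOperators Nat

/-- Generalized factorial `γ_μ(n)`: `γ_μ(0) = 1`,
`γ_μ(n+1) = (n + 1 + 2μ θ_{n+1}) γ_μ(n)` where `θ_k = 1` if `k` is odd, `0` if even. -/
noncomputable def genGamma (μ : ℝ) : ℕ → ℝ
  | 0 => 1
  | n + 1 => ((n : ℝ) + 1 + 2 * μ * (if (n + 1) % 2 = 1 then (1 : ℝ) else 0)) * genGamma μ n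

/-- Generalized exponential function `e_μ(z) = Σ_{n≥0} z^n / γ_μ(n)`. -/
noncomputable def genExp (μ : ℝ) (z : ℂ) : ℂ :=
  ∑' n : ℕ, z ^ n / (genGamma μ n : ℂ)

/-- Generalized Hermite polynomial
`H_n^μ(x) = n! Σ_{k=0}^{⌊n/2⌋} (-1)^k (2x)^{n-2k} / (k! γ_μ(n-2k))`. -/
noncomputable def genHermite (μ : ℝ) (n : ℕ) (x : ℂ) : ℂ :=
  (n ! : ℂ) * ∑ k ∈ Finset.range (n / 2 + 1),
    (-1) ^ k * (2 * x) ^ (n - 2 * k) / ((k ! : ℂ) * ((genGamma μ (n - 2 * k) : ℝ) : ℂ))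

/-- Dunkl operator `(D_μ f)(x) = f'(x) + (μ/x)(f(x) - f(-x))`. -/
noncomputable def dunkl (μ : ℝ) (f : ℝ → ℂ) (x : ℝ) : ℂ :=
  deriv f x + ((μ / x : ℝ) : ℂ) * (f x - f (-x))

/-- Euler beta function `B(a,b) = Γ(a)Γ(b)/Γ(a+b)`. -/
noncomputable def realBeta (a b : ℝ) : ℝ :=
  Real.Gamma a * Real.Gamma b / Real.Gamma (a + b)

section Aux

variable (μ : ℝ)

lemma genGamma_succ (n : ℕ) :
    genGamma μ (n + 1)
      = ((n : ℝ) + 1 + 2 * μ * (if (n + 1) % 2 = 1 then (1 : ℝ) else 0)) * genGamma μ n := rfl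

lemma ite_nonneg' (n : ℕ) : (0:ℝ) ≤ (if (n + 1) % 2 = 1 then (1 : ℝ) else 0) := by
  split <;> norm_num

lemma factor_pos (hμ : 0 ≤ μ) (n : ℕ) :
    0 < (n : ℝ) + 1 + 2 * μ * (if (n + 1) % 2 = 1 then (1 : ℝ) else 0) := by
  have h := ite_nonneg' n
  have : (0:ℝ) ≤ 2 * μ * (if (n + 1) % 2 = 1 then (1 : ℝ) else 0) := by positivity
  positivity

lemma genGamma_pos (hμ : 0 ≤ μ) (n : ℕ) : 0 < genGamma μ n := by
  induction n with
  | zero => norm_num [genGamma]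
  | succ n ih => rw [genGamma_succ]; exact mul_pos (factor_pos μ hμ n) ih

lemma factorial_le_genGamma (hμ : 0 ≤ μ) (n : ℕ) : (n ! : ℝ) ≤ genGamma μ n := by
  induction n with
  | zero => norm_num [genGamma]
  | succ n ih =>
    rw [genGamma_succ, Nat.factorial_succ]
    push_cast
    have h := ite_nonneg' n
    have h2 : (0:ℝ) ≤ 2 * μ * (if (n + 1) % 2 = 1 then (1 : ℝ) else 0) := by positivity
    have hfac : (0:ℝ) ≤ (n ! : ℝ) := by positivity
    nlinarith [genGamma_pos μ hμ n]

/-- coefficients of `e_μ(-iz)` -/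
noncomputable def cc (n : ℕ) : ℂ := (-Complex.I) ^ n / ((genGamma μ n : ℝ) : ℂ)

noncomputable def FF (z : ℂ) : ℂ := ∑' n : ℕ, cc μ n * z ^ n

noncomputable def GG (z : ℂ) : ℂ := ∑' n : ℕ, (n : ℂ) * cc μ n * z ^ (n - 1)

lemma norm_cc (hμ : 0 ≤ μ) (n : ℕ) : ‖cc μ n‖ ≤ 1 / (n ! : ℝ) := by
  have h1 : ‖cc μ n‖ = 1 / genGamma μ n := by
    rw [cc, norm_div, norm_pow, norm_neg, Complex.norm_I, one_pow, Complex.norm_real,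
      Real.norm_of_nonneg (genGamma_pos μ hμ n).le]
  rw [h1]
  exact one_div_le_one_div_of_le (by positivity) (factorial_le_genGamma μ hμ n)

lemma summable_u (R : ℝ) (hR : 0 ≤ R) : Summable (fun n : ℕ => (n : ℝ) * R ^ n / n !) := by
  refine Summable.of_nonneg_of_le (fun n => by positivity) (fun n => ?_)
    (Real.summable_pow_div_factorial (2 * R))
  have h1 : (n : ℝ) ≤ 2 ^ n := by
    exact_mod_cast (Nat.lt_two_pow_self (n := n)).le
  have : (n : ℝ) * R ^ n ≤ (2 * R) ^ n := by
    rw [mul_pow]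
    exact mul_le_mul_of_nonneg_right h1 (by positivity)
  have hfac : (0:ℝ) < (n ! : ℝ) := by positivity
  exact (div_le_div_iff_of_pos_right hfac).mpr this

lemma summable_FF (hμ : 0 ≤ μ) (z : ℂ) : Summable (fun n : ℕ => cc μ n * z ^ n) := by
  refine Summable.of_norm_bounded (Real.summable_pow_div_factorial ‖z‖) (fun n => ?_)
  rw [norm_mul, norm_pow]
  calc ‖cc μ n‖ * ‖z‖ ^ n ≤ ((1:ℝ) / (n ! : ℝ)) * ‖z‖ ^ n :=
        mul_le_mul_of_nonneg_right (norm_cc μ hμ n) (by positivity)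
    _ = ‖z‖ ^ n / (n ! : ℝ) := by ring

lemma norm_GG_term_le (hμ : 0 ≤ μ) {R : ℝ} (hR : 1 ≤ R) (n : ℕ) {y : ℂ} (hy : ‖y‖ ≤ R) :
    ‖(n : ℂ) * cc μ n * y ^ (n - 1)‖ ≤ (n : ℝ) * R ^ n / n ! := by
  have hR0 : (0:ℝ) ≤ R := le_trans zero_le_one hR
  rw [norm_mul, norm_mul, norm_pow, Complex.norm_natCast]
  have h1 : ‖y‖ ^ (n - 1) ≤ R ^ (n - 1) := pow_le_pow_left₀ (norm_nonneg y) hy _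
  have h2 : R ^ (n - 1) ≤ R ^ n := pow_le_pow_right₀ hR (Nat.sub_le n 1)
  calc (n : ℝ) * ‖cc μ n‖ * ‖y‖ ^ (n - 1)
      ≤ (n : ℝ) * (1 / n !) * R ^ n := by
        apply mul_le_mul (mul_le_mul_of_nonneg_left (norm_cc μ hμ n) (by positivity))
          (le_trans h1 h2) (by positivity) (by positivity)
    _ = (n : ℝ) * R ^ n / n ! := by ring

lemma summable_GG (hμ : 0 ≤ μ) (z : ℂ) :
    Summable (fun n : ℕ => (n : ℂ) * cc μ n * z ^ (n - 1)) := by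
  refine Summable.of_norm_bounded (summable_u (‖z‖ + 1) (by positivity)) (fun n => ?_)
  exact norm_GG_term_le μ hμ (by linarith [norm_nonneg z]) n (by linarith)

lemma hasDerivAt_FF (hμ : 0 ≤ μ) (z : ℂ) : HasDerivAt (FF μ) (GG μ z) z := by
  have hR : (1:ℝ) ≤ ‖z‖ + 1 := by linarith [norm_nonneg z]
  unfold FF GG
  refine hasDerivAt_tsum_of_isPreconnected (u := fun n : ℕ => (n : ℝ) * (‖z‖ + 1) ^ n / (n ! : ℝ))
    (g := fun (n : ℕ) (y : ℂ) => cc μ n * y ^ n)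
    (g' := fun (n : ℕ) (y : ℂ) => (n : ℂ) * cc μ n * y ^ (n - 1))
    (summable_u _ (by positivity)) (Metric.isOpen_ball (x := (0:ℂ)) (ε := ‖z‖ + 1))
    ((convex_ball (0:ℂ) (‖z‖ + 1)).isPreconnected) (fun n y _ => ?_) (fun n y hy => ?_)
    (Metric.mem_ball_self (by positivity)) (summable_FF μ hμ 0) ?_
  · have h := (hasDerivAt_pow n y).const_mul (cc μ n)
    exact h.congr_deriv (by ring)
  · rw [mem_ball_zero_iff] at hy
    exact norm_GG_term_le μ hμ hR n hy.le
  · rw [mem_ball_zero_iff]; linarith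

lemma key_cc (hμ : 0 ≤ μ) (n : ℕ) :
    (((n : ℝ) + 1 + 2 * μ * (if (n + 1) % 2 = 1 then (1 : ℝ) else 0) : ℝ) : ℂ) * cc μ (n + 1)
      = -Complex.I * cc μ n := by
  set k : ℝ := (n : ℝ) + 1 + 2 * μ * (if (n + 1) % 2 = 1 then (1 : ℝ) else 0) with hk
  have hkpos := factor_pos μ hμ n
  have hk0 : k ≠ 0 := ne_of_gt hkpos
  have hγ : genGamma μ n ≠ 0 := ne_of_gt (genGamma_pos μ hμ n)
  have h1 : genGamma μ (n + 1) = k * genGamma μ n := genGamma_succ μ n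
  rw [cc, cc, h1, pow_succ]
  push_cast
  have hk0' : (k:ℂ) ≠ 0 := Complex.ofReal_ne_zero.mpr hk0
  have hγ' : ((genGamma μ n : ℝ) : ℂ) ≠ 0 := Complex.ofReal_ne_zero.mpr hγ
  field_simp

lemma theta_eq (n : ℕ) :
    ((μ : ℂ)) * (1 - (-1) ^ (n + 1))
      = 2 * (μ:ℂ) * (if (n + 1) % 2 = 1 then (1 : ℂ) else 0) := by
  rcases Nat.even_or_odd (n + 1) with h | h
  · rw [h.neg_one_pow]
    simp [Nat.even_iff.mp h]
  · rw [h.neg_one_pow]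
    rw [Nat.odd_iff.mp h]
    norm_num
    ring

lemma ode_FF (hμ : 0 ≤ μ) (z : ℂ) :
    z * GG μ z + (μ : ℂ) * (FF μ z - FF μ (-z)) + Complex.I * z * FF μ z = 0 := by
  have S := summable_FF μ hμ
  have SG := summable_GG μ hμ z
  rw [FF, FF, GG, ← tsum_mul_left (a := z), ← Summable.tsum_sub (S z) (S (-z)),
    ← tsum_mul_left (a := (μ:ℂ)), ← tsum_mul_left (a := Complex.I * z)]
  set h₁ : ℕ → ℂ := fun n => z * ((n : ℂ) * cc μ n * z ^ (n - 1)) with hh₁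
  set h₂ : ℕ → ℂ := fun n => (μ:ℂ) * (cc μ n * z ^ n - cc μ n * (-z) ^ n) with hh₂
  set h₃ : ℕ → ℂ := fun n => Complex.I * z * (cc μ n * z ^ n) with hh₃
  have Sh₁ : Summable h₁ := SG.mul_left z
  have Sh₂ : Summable h₂ := ((S z).sub (S (-z))).mul_left _
  have Sh₃ : Summable h₃ := (S z).mul_left _
  have step1 : ∑' n, h₁ n + ∑' n, h₂ n = ∑' n, (h₁ n + h₂ n) := (Summable.tsum_add Sh₁ Sh₂).symm
  rw [step1]
  have S12 : Summable (fun n => h₁ n + h₂ n) := Sh₁.add Sh₂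
  rw [Summable.tsum_eq_zero_add S12]
  have hzero : h₁ 0 + h₂ 0 = 0 := by simp [hh₁, hh₂]
  rw [hzero, zero_add, ← Summable.tsum_add ((summable_nat_add_iff 1).mpr S12) Sh₃]
  have : ∀ n : ℕ, (h₁ (n + 1) + h₂ (n + 1)) + h₃ n = 0 := by
    intro n
    have hkey := key_cc μ hμ n
    have hθ := theta_eq μ n
    simp only [hh₁, hh₂, hh₃, Nat.add_sub_cancel]
    rw [neg_pow z (n + 1)]
    split_ifs at hkey hθ with hp <;> push_cast at hkey ⊢ <;>
      linear_combination z ^ (n+1) * hkey + z ^ (n+1) * cc μ (n+1) * hθ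
  calc ∑' n, ((h₁ (n + 1) + h₂ (n + 1)) + h₃ n) = ∑' _ : ℕ, (0:ℂ) := by
        exact tsum_congr this
    _ = 0 := tsum_zero

lemma conj_FF (t : ℝ) : (starRingEnd ℂ) (FF μ (t : ℂ)) = FF μ (-(t : ℂ)) := by
  rw [FF, FF]
  have h0 : (starRingEnd ℂ) (∑' n : ℕ, cc μ n * (t:ℂ) ^ n)
      = ∑' n : ℕ, star (cc μ n * (t:ℂ) ^ n) := tsum_star
  rw [h0]
  apply tsum_congr
  intro n
  have : star (cc μ n * (t:ℂ) ^ n) = (starRingEnd ℂ) (cc μ n) * (t:ℂ) ^ n := by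
    simp [star_mul', mul_comm, Complex.conj_ofReal, ← Complex.ofReal_pow]
  rw [this]
  have hconj : (starRingEnd ℂ) (cc μ n) = (-1) ^ n * cc μ n := by
    rw [cc, map_div₀, map_pow, Complex.conj_ofReal]
    have h5 : (starRingEnd ℂ) (-Complex.I) = (-1) * (-Complex.I) := by
      simp [Complex.conj_I]
    rw [h5, mul_pow]
    ring
  rw [hconj, neg_pow (t:ℂ) n]
  ring

lemma FF_zero : FF μ 0 = 1 := by
  rw [FF, tsum_eq_single 0 (fun n hn => by simp [zero_pow hn])]
  simp [cc, genGamma]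

lemma GG_zero : GG μ 0 = cc μ 1 := by
  rw [GG, tsum_eq_single 1 (fun n hn => ?_)]
  · norm_num
  · match n, hn with
    | 0, _ => simp
    | (m + 2), _ => simp [zero_pow (n := m + 1)]

lemma GG_eq (hμ : 0 ≤ μ) {t : ℝ} (ht : t ≠ 0) :
    GG μ (t : ℂ) = -Complex.I * FF μ (t : ℂ)
      - ((μ : ℂ) / (t : ℂ)) * (FF μ (t : ℂ) - FF μ (-(t : ℂ))) := by
  have h := ode_FF μ hμ (t : ℂ)
  have ht' : (t : ℂ) ≠ 0 := Complex.ofReal_ne_zero.mpr ht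
  field_simp
  linear_combination h

lemma hasDerivAt_Phi (hμ : 0 ≤ μ) (z : ℂ) :
    HasDerivAt (fun w => FF μ w * FF μ (-w))
      (GG μ z * FF μ (-z) - FF μ z * GG μ (-z)) z := by
  have h1 := hasDerivAt_FF μ hμ z
  have h2 : HasDerivAt (fun w => FF μ (-w)) (-GG μ (-z)) z := by
    have := (hasDerivAt_FF μ hμ (-z)).comp z (hasDerivAt_neg z)
    simpa [Function.comp_def] using this
  have h3 := h1.mul h2
  exact h3.congr_deriv (by ring)

noncomputable def gg (t : ℝ) : ℝ := (FF μ (t : ℂ) * FF μ (-(t : ℂ))).re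

lemma gg_eq_normSq (t : ℝ) : gg μ t = Complex.normSq (FF μ (t : ℂ)) := by
  rw [gg, ← conj_FF μ t, Complex.mul_conj, Complex.ofReal_re]

lemma gg_zero : gg μ 0 = 1 := by
  rw [gg]
  norm_num [FF_zero]

lemma gg_even (t : ℝ) : gg μ (-t) = gg μ t := by
  rw [gg, gg, Complex.ofReal_neg, neg_neg, mul_comm]

lemma hasDerivAt_gg (hμ : 0 ≤ μ) (t : ℝ) :
    HasDerivAt (gg μ)
      ((GG μ (t:ℂ) * FF μ (-(t:ℂ)) - FF μ (t:ℂ) * GG μ (-(t:ℂ))).re) t := by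
  have h := (hasDerivAt_Phi μ hμ (t : ℂ)).real_of_complex
  exact h

lemma hasDerivAt_gg' (hμ : 0 ≤ μ) {t : ℝ} (ht : t ≠ 0) :
    HasDerivAt (gg μ) (-(4 * μ / t * ((FF μ (t:ℂ)).im) ^ 2)) t := by
  have h := hasDerivAt_gg μ hμ t
  have e1 := GG_eq μ hμ ht
  have e2 := GG_eq μ hμ (neg_ne_zero.mpr ht)
  rw [Complex.ofReal_neg] at e2
  rw [neg_neg] at e2
  have e3 : FF μ (t:ℂ) - FF μ (-(t:ℂ)) = (2 * (FF μ (t:ℂ)).im : ℝ) * Complex.I := by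
    rw [← conj_FF μ t, Complex.sub_conj]
  have ht' : (t : ℂ) ≠ 0 := Complex.ofReal_ne_zero.mpr ht
  have h4 : GG μ (t:ℂ) * FF μ (-(t:ℂ)) - FF μ (t:ℂ) * GG μ (-(t:ℂ))
      = ((μ:ℂ) / (t:ℂ)) * (FF μ (t:ℂ) - FF μ (-(t:ℂ))) ^ 2 := by
    rw [e1, e2, div_neg]
    ring
  have hval : GG μ (t:ℂ) * FF μ (-(t:ℂ)) - FF μ (t:ℂ) * GG μ (-(t:ℂ))
      = ((-(4 * μ / t * ((FF μ (t:ℂ)).im) ^ 2) : ℝ) : ℂ) := by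
    rw [h4, e3]
    push_cast
    linear_combination (4 * (μ:ℂ) * (((FF μ (t:ℂ)).im : ℂ)) ^ 2 / (t:ℂ)) * Complex.I_sq
  rw [hval, Complex.ofReal_re] at h
  exact h

lemma antitoneOn_gg (hμ : 0 ≤ μ) (x : ℝ) : AntitoneOn (gg μ) (Set.Icc 0 x) := by
  have hdiff : Differentiable ℝ (gg μ) := fun t => (hasDerivAt_gg μ hμ t).differentiableAt
  apply antitoneOn_of_deriv_nonpos (convex_Icc 0 x) hdiff.continuous.continuousOn
    hdiff.differentiableOn
  intro t ht
  rw [interior_Icc] at ht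
  rw [(hasDerivAt_gg' μ hμ (ne_of_gt ht.1)).deriv]
  have h1 : 0 ≤ 4 * μ / t * ((FF μ (t:ℂ)).im) ^ 2 :=
    mul_nonneg (div_nonneg (by linarith) ht.1.le) (sq_nonneg _)
  linarith

lemma gg_le_one (hμ : 0 ≤ μ) {x : ℝ} (hx : 0 ≤ x) : gg μ x ≤ 1 := by
  have h := antitoneOn_gg μ hμ x ⟨le_rfl, hx⟩ ⟨hx, le_rfl⟩ hx
  rwa [gg_zero] at h

lemma im_FF_neg (hμpos : 0 < μ) : ∃ ε > 0, ∀ t ∈ Set.Ioo (0:ℝ) ε, (FF μ (t:ℂ)).im < 0 := by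
  have hμ := hμpos.le
  set f : ℝ → ℝ := fun t => (FF μ (t:ℂ)).im with hf
  have hder : HasDerivAt f ((GG μ 0).im) 0 := by
    have h := ((hasDerivAt_FF μ hμ (((0:ℝ)):ℂ)).const_mul (-Complex.I)).real_of_complex
    have heq : (fun x : ℝ => ((-Complex.I) * FF μ (x:ℂ)).re) = f := by
      funext y
      simp [hf, Complex.mul_re]
    have hv : ((-Complex.I) * GG μ (((0:ℝ)):ℂ)).re = (GG μ 0).im := by
      simp [Complex.mul_re]
    rw [heq, hv] at h
    exact h
  have hlt : (GG μ 0).im < 0 := by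
    rw [GG_zero, cc]
    have hγ : (0:ℝ) < genGamma μ 1 := genGamma_pos μ hμ 1
    rw [pow_one]
    rw [Complex.div_ofReal_im]
    simp only [Complex.neg_im, Complex.I_im]
    exact div_neg_of_neg_of_pos (by norm_num) hγ
  rw [hasDerivAt_iff_tendsto_slope] at hder
  have h2 : ∀ᶠ t in nhdsWithin (0:ℝ) (Set.Ioi 0), slope f 0 t < 0 := by
    have hmono : nhdsWithin (0:ℝ) (Set.Ioi 0) ≤ nhdsWithin (0:ℝ) {(0:ℝ)}ᶜ :=
      nhdsWithin_mono _ (fun y hy => ne_of_gt hy)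
    exact (hder.mono_left hmono).eventually_lt_const hlt
  obtain ⟨u, hu, hsub⟩ := mem_nhdsGT_iff_exists_Ioo_subset.mp h2
  refine ⟨u, hu, fun t ht => ?_⟩
  have hslope := hsub ht
  rw [Set.mem_setOf_eq, slope_def_field] at hslope
  have hf0 : f 0 = 0 := by simp [hf, FF_zero]
  rw [hf0, sub_zero, sub_zero] at hslope
  have ht0 : (0:ℝ) < t := ht.1
  have h3 := mul_neg_of_neg_of_pos hslope ht0
  rwa [div_mul_cancel₀ _ (ne_of_gt ht0)] at h3

lemma gg_lt_one (hμpos : 0 < μ) {x : ℝ} (hx : 0 < x) : gg μ x < 1 := by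
  have hμ := hμpos.le
  obtain ⟨ε, hε, him⟩ := im_FF_neg μ hμpos
  have hmin : 0 < min ε x := lt_min hε hx
  set a := min ε x / 2 with ha
  set b := min ε x * 3 / 4 with hb
  have ha0 : 0 < a := by positivity
  have hab : a < b := by rw [ha, hb]; linarith
  have hbx : b ≤ x := by
    have := min_le_right ε x
    rw [hb]; linarith
  have hbε : b < ε := by
    have := min_le_left ε x
    rw [hb]; linarith
  have hdiff : Differentiable ℝ (gg μ) := fun t => (hasDerivAt_gg μ hμ t).differentiableAt
  have anti := antitoneOn_gg μ hμ x
  have strict : StrictAntiOn (gg μ) (Set.Icc a b) := by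
    apply strictAntiOn_of_deriv_neg (convex_Icc a b) hdiff.continuous.continuousOn
    intro t ht
    rw [interior_Icc] at ht
    have ht0 : 0 < t := lt_trans ha0 ht.1
    rw [(hasDerivAt_gg' μ hμ (ne_of_gt ht0)).deriv]
    have h5 := him t ⟨ht0, lt_trans ht.2 hbε⟩
    have him2 : 0 < ((FF μ (t:ℂ)).im) ^ 2 := by nlinarith
    have h6 : 0 < 4 * μ / t * ((FF μ (t:ℂ)).im) ^ 2 :=
      mul_pos (div_pos (by linarith) ht0) him2
    linarith
  have step1 : gg μ x ≤ gg μ b :=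
    anti ⟨by linarith, hbx⟩ ⟨hx.le, le_rfl⟩ hbx
  have step2 : gg μ b < gg μ a := strict ⟨le_rfl, hab.le⟩ ⟨hab.le, le_rfl⟩ hab
  have step3 : gg μ a ≤ gg μ 0 :=
    anti ⟨le_rfl, hx.le⟩ ⟨ha0.le, by linarith⟩ ha0.le
  have := gg_zero μ
  linarith

lemma genExp_eq_FF (x : ℝ) : genExp μ (-Complex.I * x) = FF μ (x:ℂ) := by
  rw [genExp, FF]
  apply tsum_congr
  intro n
  rw [cc, mul_pow]
  ring

end Aux

/-- For every real `μ ≥ 0` and real `x`, `|e_μ(-ix)| ≤ 1`;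
moreover if `μ > 0` and `x ≠ 0` then `|e_μ(-ix)| < 1`. -/
theorem abs_genExp_neg_I_le_one (μ : ℝ) (x : ℝ) :
    (0 ≤ μ → ‖genExp μ (-Complex.I * x)‖ ≤ 1) ∧
    (0 < μ → x ≠ 0 → ‖genExp μ (-Complex.I * x)‖ < 1) := by
  constructor
  · intro hμ
    have h1 : Complex.normSq (genExp μ (-Complex.I * x)) ≤ 1 := by
      rw [genExp_eq_FF, ← gg_eq_normSq]
      rcases le_or_gt 0 x with hx | hx
      · exact gg_le_one μ hμ hx
      · rw [← gg_even μ x]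
        exact gg_le_one μ hμ (by linarith)
    rw [Complex.norm_def]
    calc Real.sqrt (Complex.normSq (genExp μ (-Complex.I * x))) ≤ Real.sqrt 1 :=
          Real.sqrt_le_sqrt h1
      _ = 1 := Real.sqrt_one
  · intro hμpos hx
    have h1 : Complex.normSq (genExp μ (-Complex.I * x)) < 1 := by
      rw [genExp_eq_FF, ← gg_eq_normSq]
      rcases hx.lt_or_gt with hneg | hpos
      · rw [← gg_even μ x]
        exact gg_lt_one μ hμpos (by linarith)
      · exact gg_lt_one μ hμpos hpos
    rw [Complex.norm_def]
    have h2 := Real.sqrt_lt_sqrt (Complex.normSq_nonneg _) h1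
    rwa [Real.sqrt_one] at h2
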